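/- Discrete entropy inequality at the left boundary (Lemma 5.1, second inequality): for every convex entropy η ∈ C²(ℝ) and all real numbers a, b, one has Q(a,b) − Q(a,a) − η′(a)·(F(a,b) − F(a,a)) ≤ 0. -/

import Mathlib

/-- Discrete entropy inequality at the left boundary (Lemma 5.1, second
inequality): for every convex entropy `η ∈ C²(ℝ)` with numerical entropy flux
`Q(u,v) = ∫_c^u η'(z) F₁'(z) dz + ∫_c^v η'(z) F₂'(z) dz` and all `a, b ∈ ℝ`,
`Q(a,b) - Q(a,a) - η'(a) (F(a,b) - F(a,a)) ≤ 0`, where `F(u,v) = F₁(u) + F₂(v)`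
and `F₂' ≤ 0`. -/
theorem stmt_9 (F₁ F₂ : ℝ → ℝ) (hF₁ : ContDiff ℝ 1 F₁) (hF₂ : ContDiff ℝ 1 F₂)
    (hmono₂ : ∀ w, deriv F₂ w ≤ 0)
    (η : ℝ → ℝ) (hη : ContDiff ℝ 2 η) (hconv : ConvexOn ℝ Set.univ η)
    (c : ℝ) (Q : ℝ → ℝ → ℝ)
    (hQ : ∀ u v, Q u v = (∫ z in c..u, deriv η z * deriv F₁ z)
        + ∫ z in c..v, deriv η z * deriv F₂ z)
    (a b : ℝ) :
    Q a b - Q a a - deriv η a * ((F₁ a + F₂ b) - (F₁ a + F₂ a)) ≤ 0 := by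
  have hηd : Continuous (deriv η) := hη.continuous_deriv one_le_two
  have hF₂d : Continuous (deriv F₂) := hF₂.continuous_deriv le_rfl
  have hcont : Continuous (fun z => deriv η z * deriv F₂ z) := hηd.mul hF₂d
  have hmη : Monotone (deriv η) := by
    have := hconv.monotoneOn_deriv (fun x _ =>
      (hη.differentiable two_ne_zero).differentiableAt)
    intro x y hxy
    exact this (Set.mem_univ x) (Set.mem_univ y) hxy
  have h1 : Q a b - Q a a = ∫ z in a..b, deriv η z * deriv F₂ z := by
    rw [hQ, hQ]
    have := intervalIntegral.integral_interval_sub_left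
      (μ := MeasureTheory.volume) (a := c) (b := b) (c := a)
      (hcont.intervalIntegrable c b) (hcont.intervalIntegrable c a)
    linarith [this]
  have h2 : F₂ b - F₂ a = ∫ z in a..b, deriv F₂ z :=
    (intervalIntegral.integral_deriv_eq_sub
      (fun x _ => (hF₂.differentiable one_ne_zero).differentiableAt)
      (hF₂d.intervalIntegrable _ _)).symm
  have h3 : deriv η a * (F₂ b - F₂ a) = ∫ z in a..b, deriv η a * deriv F₂ z := by
    rw [h2, intervalIntegral.integral_const_mul]
  have key : (∫ z in a..b, (deriv η z - deriv η a) * deriv F₂ z) ≤ 0 := by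
    rcases le_total a b with hab | hab
    · have : (∫ z in a..b, (deriv η z - deriv η a) * deriv F₂ z) ≤ ∫ z in a..b, (0:ℝ) := by
        apply intervalIntegral.integral_mono_on hab
          (((hηd.sub continuous_const).mul hF₂d).intervalIntegrable _ _)
          (intervalIntegrable_const)
        intro x hx
        exact mul_nonpos_of_nonneg_of_nonpos
          (sub_nonneg.mpr (hmη hx.1)) (hmono₂ x)
      simpa using this
    · rw [intervalIntegral.integral_symm]
      have : (∫ z in b..a, (0:ℝ)) ≤ ∫ z in b..a, (deriv η z - deriv η a) * deriv F₂ z := by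
        apply intervalIntegral.integral_mono_on hab
          (intervalIntegrable_const)
          (((hηd.sub continuous_const).mul hF₂d).intervalIntegrable _ _)
        intro x hx
        show (0:ℝ) ≤ (deriv η x - deriv η a) * deriv F₂ x
        nlinarith [sub_nonpos.mpr (hmη hx.2), hmono₂ x]
      simpa using this
  have hsplit : (∫ z in a..b, (deriv η z - deriv η a) * deriv F₂ z)
      = (∫ z in a..b, deriv η z * deriv F₂ z) - ∫ z in a..b, deriv η a * deriv F₂ z := by
    rw [← intervalIntegral.integral_sub (f := fun z => deriv η z * deriv F₂ z)
      (g := fun z => deriv η a * deriv F₂ z) (hcont.intervalIntegrable _ _)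
      ((continuous_const.mul hF₂d).intervalIntegrable _ _)]
    congr 1; ext z; ring
  have : (F₁ a + F₂ b) - (F₁ a + F₂ a) = F₂ b - F₂ a := by ring
  rw [this, h1, h3, ← hsplit]
  exact key
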